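/- For a connected graph G with magnetic field vectors M_i ∈ ℂ^q, the variable-field Potts partition function Z(G) lies in the subring generated by the quantities e^{β J_e} − 1 (e ∈ E(G)) and X_M = Σ_{α=1}^q e^{β M_α} for M ranging over the set of all sums Σ_{i} ε_i M_i with ε_i ∈ {0, 1}; i.e., Z(G) is a polynomial with integer coefficients in these quantities. -/
import Mathlib


open Finset

structure WGraph (S : Type) (L : Type) where
  V : Type
  E : Type
  [fV : Fintype V]
  [dV : DecidableEq V]
  [fE : Fintype E]
  [dE : DecidableEq E]
  ends : E → V × V
  ω : V → S
  γ : E → L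

attribute [instance] WGraph.fV WGraph.dV WGraph.fE WGraph.dE

namespace WGraph
variable {S L : Type}

def IsLoop (G : WGraph S L) (e : G.E) : Prop := (G.ends e).1 = (G.ends e).2

def delete (G : WGraph S L) (e₀ : G.E) : WGraph S L where
  V := G.V
  E := {e : G.E // e ≠ e₀}
  ends := fun e => G.ends e.1
  ω := G.ω
  γ := fun e => G.γ e.1

def contract [Add S] (G : WGraph S L) (e₀ : G.E) (h : ¬ G.IsLoop e₀) : WGraph S L where
  V := {v : G.V // v ≠ (G.ends e₀).2}
  E := {e : G.E // e ≠ e₀}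
  ends := fun e =>
    ((if hv : (G.ends e.1).1 = (G.ends e₀).2 then ⟨(G.ends e₀).1, h⟩
        else ⟨(G.ends e.1).1, hv⟩ : {v : G.V // v ≠ (G.ends e₀).2}),
     (if hv : (G.ends e.1).2 = (G.ends e₀).2 then ⟨(G.ends e₀).1, h⟩
        else ⟨(G.ends e.1).2, hv⟩))
  ω := fun v =>
    if v.1 = (G.ends e₀).1 then G.ω (G.ends e₀).1 + G.ω (G.ends e₀).2 else G.ω v.1
  γ := fun e => G.γ e.1

def mapEdges {L' : Type} (G : WGraph S L) (φ : L → L') : WGraph S L' where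
  V := G.V
  E := G.E
  ends := G.ends
  ω := G.ω
  γ := φ ∘ G.γ

def stateGraph (G : WGraph S L) (A : Finset G.E) : SimpleGraph G.V :=
  SimpleGraph.fromRel (fun v w => ∃ e ∈ A, G.ends e = (v, w))

noncomputable instance (G : WGraph S L) (A : Finset G.E) :
    Fintype (G.stateGraph A).ConnectedComponent := Fintype.ofFinite _

noncomputable def kcomp (G : WGraph S L) (A : Finset G.E) : ℕ :=
  Fintype.card (G.stateGraph A).ConnectedComponent

open scoped Classical in
noncomputable def compWeight [AddCommMonoid S] (G : WGraph S L) (A : Finset G.E)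
    (c : (G.stateGraph A).ConnectedComponent) : S :=
  ∑ v ∈ Finset.univ.filter (fun v => (G.stateGraph A).connectedComponentMk v = c), G.ω v

end WGraph

/-- The variable-field q-state Potts Hamiltonian:
`h(σ) = -Σ_{e={i,j}} J_e δ(σ_i,σ_j) - Σ_i Σ_α M_{i,α} δ(α,σ_i)`. -/
noncomputable def pottsH (q : ℕ) (G : WGraph (Fin q → ℂ) ℂ) (σ : G.V → Fin q) : ℂ :=
  -(∑ e : G.E, G.γ e * (if σ (G.ends e).1 = σ (G.ends e).2 then 1 else 0))
    - ∑ v : G.V, ∑ α : Fin q, G.ω v α * (if α = σ v then 1 else 0)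

/-- The variable-field q-state Potts partition function `Z(G) = Σ_σ e^{-β h(σ)}`. -/
noncomputable def pottsZ (q : ℕ) (β : ℂ) (G : WGraph (Fin q → ℂ) ℂ) : ℂ :=
  ∑ σ : G.V → Fin q, Complex.exp (-β * pottsH q G σ)

open scoped Classical in
lemma sum_compat (q : ℕ) (β : ℂ) (G : WGraph (Fin q → ℂ) ℂ) (A : Finset G.E) :
    ∑ σ ∈ Finset.univ.filter
        (fun σ : G.V → Fin q => ∀ e ∈ A, σ (G.ends e).1 = σ (G.ends e).2),
      ∏ v : G.V, Complex.exp (β * G.ω v (σ v))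
    = ∏ c : (G.stateGraph A).ConnectedComponent,
        ∑ α : Fin q, Complex.exp (β * WGraph.compWeight G A c α) := by
  classical
  rw [Fintype.prod_sum]
  have hconst : ∀ (σ : G.V → Fin q), (∀ e ∈ A, σ (G.ends e).1 = σ (G.ends e).2) →
      ∀ (v w : G.V) (p : (G.stateGraph A).Walk v w), p.IsPath → σ v = σ w := by
    intro σ hσ v w p hp
    clear hp
    induction p with
    | nil => rfl
    | cons h p ih =>
      refine Eq.trans ?_ ih
      rcases h with ⟨-, ⟨e, he, hends⟩ | ⟨e, he, hends⟩⟩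
      · have := hσ e he; rw [hends] at this; exact this
      · have := hσ e he; rw [hends] at this; exact this.symm
  have hτ : ∀ τ : (G.stateGraph A).ConnectedComponent → Fin q,
      ∏ c, Complex.exp (β * WGraph.compWeight G A c (τ c))
        = ∏ v : G.V, Complex.exp (β * G.ω v
            (τ ((G.stateGraph A).connectedComponentMk v))) := by
    intro τ
    rw [← Fintype.prod_fiberwise (fun v => (G.stateGraph A).connectedComponentMk v)
      (fun v => Complex.exp (β * G.ω v (τ ((G.stateGraph A).connectedComponentMk v))))]
    refine Finset.prod_congr rfl fun c _ => ?_
    rw [WGraph.compWeight, Finset.sum_apply, Finset.mul_sum, Complex.exp_sum]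
    trans ∏ i : { i // (G.stateGraph A).connectedComponentMk i = c },
      Complex.exp (β * G.ω i.1 (τ c))
    · exact Finset.prod_subtype _ (fun v => by simp)
        (fun v => Complex.exp (β * G.ω v (τ c)))
    · refine Finset.prod_congr (by congr) fun i _ => ?_
      rw [i.2]
  refine Finset.sum_bij'
    (i := fun σ hσ => SimpleGraph.ConnectedComponent.lift σ
      (hconst σ (by simpa using hσ)))
    (j := fun τ _ => fun v => τ ((G.stateGraph A).connectedComponentMk v))
    (fun σ hσ => Finset.mem_univ _) ?_ ?_ ?_ ?_
  · intro τ _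
    simp only [Finset.mem_filter, Finset.mem_univ, true_and]
    intro e he
    by_cases hl : (G.ends e).1 = (G.ends e).2
    · rw [hl]
    · have hadj : (G.stateGraph A).Adj (G.ends e).1 (G.ends e).2 := by
        rw [WGraph.stateGraph, SimpleGraph.fromRel_adj]
        exact ⟨hl, Or.inl ⟨e, he, rfl⟩⟩
      rw [SimpleGraph.ConnectedComponent.sound hadj.reachable]
  · intro σ hσ; funext v; rfl
  · intro τ hτ'
    funext c
    induction c using SimpleGraph.ConnectedComponent.ind with
    | _ v => rfl
  · intro σ hσ
    rw [hτ]
    exact Finset.prod_congr rfl fun v _ => rfl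

lemma prod_ite_all {ι : Type*} [DecidableEq ι] (A : Finset ι) (c : ι → Prop)
    [DecidablePred c] (w : ι → ℂ) :
    (∏ e ∈ A, if c e then w e else 0) =
      if ∀ e ∈ A, c e then ∏ e ∈ A, w e else 0 := by
  split_ifs with h
  · exact Finset.prod_congr rfl fun e he => if_pos (h e he)
  · push_neg at h
    obtain ⟨e, he, hce⟩ := h
    exact Finset.prod_eq_zero he (if_neg hce)

open scoped Classical in
/-- for a connected graph, the variable-field Potts partition function lies in
the subring of ℂ generated by the quantities `e^{βJ_e} - 1` and the `X_M = Σ_α e^{βM_α}` for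
`M` ranging over all sums `Σ_i ε_i M_i` with `ε_i ∈ {0,1}`. -/
theorem pottsZ_is_polynomial (q : ℕ) (β : ℂ) (G : WGraph (Fin q → ℂ) ℂ)
    (hconn : (G.stateGraph Finset.univ).Connected) :
    pottsZ q β G ∈ Subring.closure
      ({c : ℂ | ∃ e : G.E, c = Complex.exp (β * G.γ e) - 1} ∪
       {c : ℂ | ∃ ε : G.V → Bool, c =
          ∑ α : Fin q,
            Complex.exp (β * (∑ v ∈ Finset.univ.filter (fun v => ε v = true), G.ω v) α)}) := by
  classical
  have h1 : ∀ σ : G.V → Fin q, Complex.exp (-β * pottsH q G σ) =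
      (∏ e : G.E, ((if σ (G.ends e).1 = σ (G.ends e).2
          then Complex.exp (β * G.γ e) - 1 else 0) + 1))
        * ∏ v : G.V, Complex.exp (β * G.ω v (σ v)) := by
    intro σ
    have hM : ∀ v : G.V, (∑ α : Fin q, G.ω v α * (if α = σ v then 1 else 0))
        = G.ω v (σ v) := by
      intro v
      simp [mul_ite, Finset.sum_ite_eq']
    have hh : -β * pottsH q G σ =
        (∑ e : G.E, β * (G.γ e * (if σ (G.ends e).1 = σ (G.ends e).2 then 1 else 0)))
          + ∑ v : G.V, β * G.ω v (σ v) := by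
      simp only [pottsH, hM]
      rw [← Finset.mul_sum, ← Finset.mul_sum]
      ring
    rw [hh, Complex.exp_add, Complex.exp_sum, Complex.exp_sum]
    refine congrArg₂ (· * ·) (Finset.prod_congr rfl fun e _ => ?_) rfl
    by_cases h : σ (G.ends e).1 = σ (G.ends e).2 <;> simp [h]
  have h2 : pottsZ q β G = ∑ A : Finset G.E,
      (∏ e ∈ A, (Complex.exp (β * G.γ e) - 1)) *
        ∑ σ ∈ Finset.univ.filter
            (fun σ : G.V → Fin q => ∀ e ∈ A, σ (G.ends e).1 = σ (G.ends e).2),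
          ∏ v : G.V, Complex.exp (β * G.ω v (σ v)) := by
    rw [pottsZ]
    simp only [h1, Fintype.prod_add, Finset.prod_const_one, mul_one, Finset.sum_mul]
    rw [Finset.sum_comm]
    refine Finset.sum_congr rfl fun A _ => ?_
    calc ∑ σ : G.V → Fin q,
          (∏ e ∈ A, if σ (G.ends e).1 = σ (G.ends e).2
              then Complex.exp (β * G.γ e) - 1 else 0)
            * ∏ v : G.V, Complex.exp (β * G.ω v (σ v))
        = ∑ σ : G.V → Fin q,
            (if ∀ e ∈ A, σ (G.ends e).1 = σ (G.ends e).2 then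
              (∏ e ∈ A, (Complex.exp (β * G.γ e) - 1))
                * ∏ v : G.V, Complex.exp (β * G.ω v (σ v)) else 0) := by
          refine Finset.sum_congr rfl fun σ _ => ?_
          rw [prod_ite_all, ite_mul, zero_mul]
          congr
      _ = ∑ σ ∈ Finset.univ.filter
            (fun σ : G.V → Fin q => ∀ e ∈ A, σ (G.ends e).1 = σ (G.ends e).2),
            (∏ e ∈ A, (Complex.exp (β * G.γ e) - 1))
              * ∏ v : G.V, Complex.exp (β * G.ω v (σ v)) := (Finset.sum_filter _ _).symm
      _ = _ := by rw [← Finset.mul_sum]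
  rw [h2]
  refine Subring.sum_mem _ fun A _ => Subring.mul_mem _ ?_ ?_
  · exact Subring.prod_mem _ fun e _ =>
      Subring.subset_closure (Or.inl ⟨e, rfl⟩)
  · rw [sum_compat]
    refine Subring.prod_mem _ fun c _ => Subring.subset_closure (Or.inr
      ⟨fun v => decide ((G.stateGraph A).connectedComponentMk v = c), ?_⟩)
    refine Finset.sum_congr rfl fun α _ => ?_
    congr 2
    rw [WGraph.compWeight, Finset.sum_apply, Finset.sum_apply]
    refine Finset.sum_congr ?_ fun v _ => rfl
    ext v
    simp
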